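/- arXiv:2106.05770 — 2 statements merged into one kernel-verified Lean document; each statement's English description precedes it below -/
import Mathlib

section
/- Let z0 ∈ ℂ and let B, X, A be functions of a complex variable such that: B is analytic at z0 with B(z0) = z0; X is analytic at z0 and nonconstant near z0, with d ≥ 1 the order of vanishing of X − X(z0) at z0; A is analytic at X(z0); and A(X(z)) = X(B(z)) for all z in some neighborhood of z0. Then X(z0) is a fixed point of A, i.e., A(X(z0)) = X(z0), and its multiplier satisfies A′(X(z0)) = (B′(z0))^d. -/
open Polynomial Filter

/-- The `l`-th compositional iterate of a polynomial (the 0-th iterate is `X`). -/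
noncomputable def polyIter (A : Polynomial ℂ) : ℕ → Polynomial ℂ
  | 0 => Polynomial.X
  | n + 1 => A.comp (polyIter A n)

/-- A polynomial `A` of degree `n` is special if there is a degree-one polynomial `σ`
(with compositional inverse `τ`) such that `σ ∘ A ∘ σ⁻¹` equals `z^n`, `T_n` or `-T_n`. -/
def IsSpecialPoly (A : Polynomial ℂ) : Prop :=
  ∃ σ τ : Polynomial ℂ, σ.degree = 1 ∧ σ.comp τ = Polynomial.X ∧ τ.comp σ = Polynomial.X ∧
    (σ.comp (A.comp τ) = Polynomial.X ^ A.natDegree ∨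
     σ.comp (A.comp τ) = Polynomial.Chebyshev.T ℂ (A.natDegree : ℤ) ∨
     σ.comp (A.comp τ) = -Polynomial.Chebyshev.T ℂ (A.natDegree : ℤ))

/-- A Poincaré function for `(A, z0, lam)`: an entire function `P` with `P 0 = z0`,
`P' 0 ≠ 0` and `P (lam * z) = A (P z)` for all `z`. -/
def IsPoincare (A : Polynomial ℂ) (z0 lam : ℂ) (P : ℂ → ℂ) : Prop :=
  Differentiable ℂ P ∧ P 0 = z0 ∧ deriv P 0 ≠ 0 ∧ ∀ z : ℂ, P (lam * z) = A.eval (P z)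

/-- The order of vanishing of `X - X(z0)` at `z0`. -/
noncomputable def polyOrd (X : Polynomial ℂ) (z0 : ℂ) : ℕ :=
  Polynomial.rootMultiplicity z0 (X - Polynomial.C (X.eval z0))

/-- A Böttcher function for a polynomial `A` of degree `n ≥ 2`: a function holomorphic on
`|z| > R` for some `R > 0`, with `B z / z` tending to a nonzero finite limit at infinity,
satisfying `B (z^n) = A (B z)` for `|z| > R`. -/
def IsBoettcher (A : Polynomial ℂ) (B : ℂ → ℂ) : Prop :=
  ∃ R : ℝ, 0 < R ∧ (∀ z : ℂ, R < ‖z‖ → AnalyticAt ℂ B z) ∧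
    (∃ c : ℂ, c ≠ 0 ∧ Filter.Tendsto (fun z => B z / z) (Bornology.cobounded ℂ) (nhds c)) ∧
    ∀ z : ℂ, R < ‖z‖ → B (z ^ A.natDegree) = A.eval (B z)

theorem stmt16 (z0 : ℂ) (A X B : ℂ → ℂ)
    (hB : AnalyticAt ℂ B z0) (hBfix : B z0 = z0)
    (hX : AnalyticAt ℂ X z0)
    (d : ℕ) (hd : 1 ≤ d)
    (hord : iteratedDeriv d X z0 ≠ 0)
    (hord' : ∀ k : ℕ, 0 < k → k < d → iteratedDeriv k X z0 = 0)
    (hA : AnalyticAt ℂ A (X z0))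
    (hsemi : ∀ᶠ z in nhds z0, A (X z) = X (B z)) :
    A (X z0) = X z0 ∧ deriv A (X z0) = (deriv B z0) ^ d := by
  classical
  have hfix : A (X z0) = X z0 := by
    have h := hsemi.self_of_nhds
    rwa [hBfix] at h
  refine ⟨hfix, ?_⟩
  -- the function f = X - X z0 and its power series
  have hf : AnalyticAt ℂ (fun z => X z - X z0) z0 := hX.sub analyticAt_const
  obtain ⟨q, hq⟩ := hf
  -- iterated derivatives of f agree with those of X in positive degree
  have hiter : ∀ k : ℕ, 1 ≤ k →
      iteratedDeriv k (fun z => X z - X z0) z0 = iteratedDeriv k X z0 := by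
    intro k hk
    obtain ⟨m, rfl⟩ := Nat.exists_eq_add_of_le hk
    rw [add_comm 1 m, iteratedDeriv_succ', iteratedDeriv_succ']
    congr 1
    funext z
    exact deriv_sub_const _
  -- coefficients versus iterated derivatives
  have hcoeff : ∀ n : ℕ, iteratedDeriv n (fun z => X z - X z0) z0 = (Nat.factorial n) • q.coeff n := by
    intro n
    obtain ⟨r, hr⟩ := hq
    rw [iteratedDeriv_eq_iteratedFDeriv]
    exact (hr.factorial_smul (1 : ℂ) n).symm
  have hqd : q d ≠ 0 := by
    intro h0
    apply hord
    rw [← hiter d hd, hcoeff, FormalMultilinearSeries.coeff_eq_zero.mpr h0, smul_zero]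
  have hqne : q ≠ 0 := fun h => hqd (by rw [h]; rfl)
  have hqlt : ∀ k : ℕ, k < d → q k = 0 := by
    intro k hk
    rw [← FormalMultilinearSeries.coeff_eq_zero]
    rcases Nat.eq_zero_or_pos k with rfl | hkpos
    · have h0 : q.coeff 0 = X z0 - X z0 := hq.coeff_zero 1
      rw [h0, sub_self]
    · have h1 : iteratedDeriv k (fun z => X z - X z0) z0 = 0 := by
        rw [hiter k hkpos]
        exact hord' k hkpos hk
      have h2 := (hcoeff k).symm.trans h1
      rwa [nsmul_eq_mul, mul_eq_zero, or_iff_right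
        (by exact_mod_cast Nat.factorial_ne_zero k)] at h2
  have horder : q.order = d := by
    refine le_antisymm (Nat.sInf_le hqd) ?_
    refine le_csInf ⟨d, hqd⟩ ?_
    intro k hk
    by_contra hlt
    exact hk (hqlt k (lt_of_not_ge hlt))
  -- factorization of f
  set g : ℂ → ℂ := (Function.swap dslope z0)^[d] (fun z => X z - X z0) with hgdef
  have hg_an : AnalyticAt ℂ g z0 := ⟨_, hq.has_fpower_series_iterate_dslope_fslope d⟩
  have hg_ne : g z0 ≠ 0 := by
    have h := hq.iterate_dslope_fslope_ne_zero hqne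
    rwa [horder] at h
  have hg_eq : ∀ᶠ z in nhds z0, X z - X z0 = (z - z0) ^ d • g z := by
    have h := hq.eq_pow_order_mul_iterate_dslope
    rw [horder] at h
    exact Filter.Eventually.of_forall h
  -- dslope factorizations of A and B
  obtain ⟨pA, hpA⟩ := hA
  have hdA_an : AnalyticAt ℂ (dslope A (X z0)) (X z0) :=
    ⟨_, hpA.has_fpower_series_dslope_fslope⟩
  obtain ⟨pB, hpB⟩ := hB
  have hkB_an : AnalyticAt ℂ (dslope B z0) z0 :=
    ⟨_, hpB.has_fpower_series_dslope_fslope⟩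
  have hBtend : Filter.Tendsto B (nhds z0) (nhds z0) := by
    have h := hkB_an.continuousAt -- dummy
    have h2 := (AnalyticAt.continuousAt ⟨pB, hpB⟩).tendsto
    rwa [hBfix] at h2
  -- key eventual identity
  have hev : ∀ᶠ z in nhds z0,
      (z - z0) ^ d * (g z * dslope A (X z0) (X z)) =
      (z - z0) ^ d * (dslope B z0 z ^ d * g (B z)) := by
    filter_upwards [hsemi, hg_eq, hBtend.eventually hg_eq] with z h1 h2 h3
    have e1 : A (X z) - X z0 = (z - z0) ^ d * (g z * dslope A (X z0) (X z)) := by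
      conv_lhs => rw [← hfix]
      rw [← sub_smul_dslope A (X z0) (X z), smul_eq_mul, h2, smul_eq_mul]
      ring
    have hb : B z - z0 = (z - z0) * dslope B z0 z := by
      conv_lhs => rw [← hBfix]
      rw [← sub_smul_dslope B z0 z, smul_eq_mul]
    have e2 : X (B z) - X z0 = (z - z0) ^ d * (dslope B z0 z ^ d * g (B z)) := by
      rw [h3, smul_eq_mul, hb, mul_pow]
      ring
    rw [← e1, ← e2, h1]
  have hev' : ∀ᶠ z in nhdsWithin z0 {z0}ᶜ,
      g z * dslope A (X z0) (X z) = dslope B z0 z ^ d * g (B z) := by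
    filter_upwards [hev.filter_mono nhdsWithin_le_nhds, eventually_mem_nhdsWithin] with z h1 h2
    have hz : z - z0 ≠ 0 := sub_ne_zero.mpr h2
    exact mul_left_cancel₀ (pow_ne_zero d hz) h1
  -- take limits
  have L1 : Filter.Tendsto (fun z => g z * dslope A (X z0) (X z)) (nhdsWithin z0 {z0}ᶜ)
      (nhds (g z0 * dslope A (X z0) (X z0))) := by
    have hc : ContinuousAt (fun z => g z * dslope A (X z0) (X z)) z0 :=
      hg_an.continuousAt.mul (hdA_an.continuousAt.comp hX.continuousAt)
    exact hc.continuousWithinAt.tendsto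
  have L2 : Filter.Tendsto (fun z => dslope B z0 z ^ d * g (B z)) (nhdsWithin z0 {z0}ᶜ)
      (nhds (dslope B z0 z0 ^ d * g (B z0))) := by
    have hgB : ContinuousAt (fun z => g (B z)) z0 := by
      refine ContinuousAt.comp ?_ (AnalyticAt.continuousAt ⟨pB, hpB⟩)
      rw [hBfix]; exact hg_an.continuousAt
    have hc : ContinuousAt (fun z => dslope B z0 z ^ d * g (B z)) z0 :=
      (hkB_an.continuousAt.pow d).mul hgB
    exact hc.continuousWithinAt.tendsto
  have key : g z0 * dslope A (X z0) (X z0) = dslope B z0 z0 ^ d * g (B z0) :=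
    tendsto_nhds_unique (L1.congr' hev') L2
  rw [dslope_same, dslope_same, hBfix] at key
  exact mul_right_cancel₀ hg_ne (by rw [mul_comm (deriv A (X z0))]; rw [key])
end

section
/- Let A, B be polynomials over ℂ of degree at least two and X a nonconstant polynomial such that A ∘ X = X ∘ B. Let z0 be a repelling fixed point of B with multiplier λ0 = B′(z0), |λ0| > 1, and let 𝓟_B be a Poincaré function for (B, z0, λ0). Set d = ord_{z0} X, z1 = X(z0), and λ1 = λ0^d. Then z1 is a repelling fixed point of A with multiplier λ1, and there exists a Poincaré function 𝓟_A for (A, z1, λ1) such that X(𝓟_B(z)) = 𝓟_A(z^d) for all z ∈ ℂ. -/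
open Polynomial Filter

open Topology


noncomputable def divDiff (A : Polynomial ℂ) (x y : ℂ) : ℂ :=
  ∑ i ∈ Finset.range (A.natDegree + 1), A.coeff i * ∑ j ∈ Finset.range i, x ^ j * y ^ (i - 1 - j)

lemma divDiff_spec (A : Polynomial ℂ) (x y : ℂ) :
    (x - y) * divDiff A x y = A.eval x - A.eval y := by
  rw [divDiff, Finset.mul_sum, eval_eq_sum_range (p := A) x, eval_eq_sum_range (p := A) y,
    ← Finset.sum_sub_distrib]
  refine Finset.sum_congr rfl fun i _ => ?_
  calc (x - y) * (A.coeff i * ∑ j ∈ Finset.range i, x ^ j * y ^ (i - 1 - j))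
      = A.coeff i * ((∑ j ∈ Finset.range i, x ^ j * y ^ (i - 1 - j)) * (x - y)) := by ring
    _ = A.coeff i * (x ^ i - y ^ i) := by rw [geom_sum₂_mul]
    _ = A.coeff i * x ^ i - A.coeff i * y ^ i := by ring

lemma divDiff_diag (A : Polynomial ℂ) (x : ℂ) :
    divDiff A x x = A.derivative.eval x := by
  rw [derivative_eval, A.sum_over_range (by simp), divDiff]
  refine Finset.sum_congr rfl fun i _ => ?_
  have : ∀ j ∈ Finset.range i, x ^ j * x ^ (i - 1 - j) = x ^ (i - 1) := by
    intro j hj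
    rw [← pow_add]
    congr 1
    have := Finset.mem_range.1 hj
    omega
  rw [Finset.sum_congr rfl this, Finset.sum_const, Finset.card_range, nsmul_eq_mul]
  ring

lemma divDiff_continuous (A : Polynomial ℂ) :
    Continuous fun p : ℂ × ℂ => divDiff A p.1 p.2 := by
  unfold divDiff
  refine continuous_finset_sum _ fun i _ => Continuous.mul continuous_const ?_
  exact continuous_finset_sum _ fun j _ =>
    ((continuous_fst.pow j).mul (continuous_snd.pow _))

lemma punctured_limit_eq {F G : ℂ → ℂ} (hF : ContinuousAt F 0) (hG : ContinuousAt G 0)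
    (h : ∀ᶠ z in 𝓝[≠] (0:ℂ), F z = G z) : F 0 = G 0 := by
  have h1 : Tendsto F (𝓝[≠] (0:ℂ)) (𝓝 (F 0)) := hF.tendsto.mono_left nhdsWithin_le_nhds
  have h2 : Tendsto G (𝓝[≠] (0:ℂ)) (𝓝 (G 0)) := hG.tendsto.mono_left nhdsWithin_le_nhds
  exact tendsto_nhds_unique (h1.congr' h) h2

set_option maxHeartbeats 1000000 in
theorem stmt17 (A B : Polynomial ℂ) (hA : 2 ≤ A.natDegree) (hB : 2 ≤ B.natDegree)
    (X : Polynomial ℂ) (hX : 0 < X.natDegree)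
    (hsemi : A.comp X = X.comp B)
    (z0 lam0 : ℂ) (hfix : B.eval z0 = z0) (hm0 : lam0 = B.derivative.eval z0)
    (hrep : 1 < ‖lam0‖)
    (PB : ℂ → ℂ) (hPB : IsPoincare B z0 lam0 PB)
    (d : ℕ) (hd : d = polyOrd X z0)
    (z1 lam1 : ℂ) (hz1 : z1 = X.eval z0) (hlam1 : lam1 = lam0 ^ d) :
    A.eval z1 = z1 ∧ A.derivative.eval z1 = lam1 ∧ 1 < ‖lam1‖ ∧
    ∃ PA : ℂ → ℂ, IsPoincare A z1 lam1 PA ∧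
      ∀ z : ℂ, X.eval (PB z) = PA (z ^ d) := by
  obtain ⟨hPBdiff, hPB0, hPBd, hPBeq⟩ := hPB
  -- basic facts
  have hXne : X - C (X.eval z0) ≠ 0 := by
    intro h
    have : X = C (X.eval z0) := by linear_combination (norm := ring_nf) h
    rw [this] at hX
    simp at hX
  have hd0 : 0 < d := by
    rw [hd, polyOrd]
    rw [Polynomial.rootMultiplicity_pos hXne]
    simp [Polynomial.IsRoot]
  have hl0ne : lam0 ≠ 0 := by
    intro h; rw [h] at hrep; simp at hrep; linarith
  have hdC : (d : ℂ) ≠ 0 := Nat.cast_ne_zero.2 hd0.ne'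
  -- fixed point
  have hz1fix : A.eval z1 = z1 := by
    have h := congrArg (Polynomial.eval z0) hsemi
    simp only [eval_comp, hfix] at h
    rw [hz1]; exact h
  -- polynomial factorization
  set W : Polynomial ℂ := (X - C (X.eval z0)) /ₘ ((Polynomial.X - C z0) ^ d) with hWdef
  have hXfac : ∀ w : ℂ, X.eval w - z1 = (w - z0) ^ d * W.eval w := by
    intro w
    have hd' : rootMultiplicity z0 (X - C (X.eval z0)) = d := by rw [hd]; rfl
    have h := Polynomial.pow_mul_divByMonic_rootMultiplicity_eq (X - C (X.eval z0)) z0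
    rw [hd'] at h
    have h2 := congrArg (Polynomial.eval w) h
    simp only [eval_mul, eval_pow, eval_sub, eval_X, eval_C] at h2
    rw [hz1, ← h2, hWdef]
  have hW0 : W.eval z0 ≠ 0 := by
    rw [hWdef, hd, polyOrd]
    exact Polynomial.eval_divByMonic_pow_rootMultiplicity_ne_zero z0 hXne
  -- local factorization of Q
  set u : ℂ → ℂ := dslope PB 0 with hudef
  have hu : ∀ z : ℂ, PB z - z0 = z * u z := by
    intro z
    have h := sub_smul_dslope PB 0 z
    rw [sub_zero, hPB0, smul_eq_mul] at h
    exact h.symm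
  have hu0 : u 0 ≠ 0 := by
    rw [hudef, dslope_same]; exact hPBd
  have hucont : ContinuousAt u 0 :=
    continuousAt_dslope_same.2 (hPBdiff 0)
  set Q : ℂ → ℂ := fun z => X.eval (PB z) with hQdef
  have hQdiff : Differentiable ℂ Q := X.differentiable.comp hPBdiff
  have hQ0 : Q 0 = z1 := by rw [hQdef]; simp [hPB0, hz1]
  set g : ℂ → ℂ := fun z => u z ^ d * W.eval (PB z) with hgdef
  have hQfac : ∀ z : ℂ, Q z - z1 = z ^ d * g z := by
    intro z
    rw [hQdef, hgdef]
    simp only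
    rw [hXfac (PB z), hu z, mul_pow]
    ring
  have hgcont : ContinuousAt g 0 := by
    apply ContinuousAt.mul (hucont.pow d)
    exact (W.continuous.comp hPBdiff.continuous).continuousAt
  have hg0 : g 0 ≠ 0 := by
    rw [hgdef]
    simp only [hPB0]
    exact mul_ne_zero (pow_ne_zero d hu0) hW0
  -- functional equation for Q
  have hQeq : ∀ z : ℂ, Q (lam0 * z) = A.eval (Q z) := by
    intro z
    rw [hQdef]
    simp only
    rw [hPBeq z, ← eval_comp, ← hsemi, eval_comp]
  -- key limit computation: divDiff A z1 z1 = lam0 ^ d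
  have hdd : divDiff A z1 z1 = lam0 ^ d := by
    have hF : ContinuousAt (fun z => g z * divDiff A (Q z) z1) 0 := by
      apply hgcont.mul
      exact ((divDiff_continuous A).comp
        (hQdiff.continuous.prodMk continuous_const)).continuousAt
    have hG : ContinuousAt (fun z => lam0 ^ d * g (lam0 * z)) 0 := by
      apply ContinuousAt.mul continuousAt_const
      have : (fun z : ℂ => g (lam0 * z)) = g ∘ (fun z => lam0 * z) := rfl
      rw [this]
      apply ContinuousAt.comp
      · simpa using hgcont
      · exact (continuous_const.mul continuous_id).continuousAt
    have hev : ∀ᶠ z in 𝓝[≠] (0:ℂ),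
        g z * divDiff A (Q z) z1 = lam0 ^ d * g (lam0 * z) := by
      filter_upwards [self_mem_nhdsWithin] with z hz
      have hzd : (z : ℂ) ^ d ≠ 0 := pow_ne_zero d hz
      apply mul_left_cancel₀ hzd
      have h1 : (Q z - z1) * divDiff A (Q z) z1 = Q (lam0 * z) - z1 := by
        rw [divDiff_spec, hQeq z, hz1fix]
      rw [hQfac z] at h1
      have h2 : Q (lam0 * z) - z1 = (lam0 * z) ^ d * g (lam0 * z) := hQfac (lam0 * z)
      rw [h2, mul_pow] at h1
      calc z ^ d * (g z * divDiff A (Q z) z1) = z ^ d * g z * divDiff A (Q z) z1 := by ring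
        _ = lam0 ^ d * z ^ d * g (lam0 * z) := h1
        _ = z ^ d * (lam0 ^ d * g (lam0 * z)) := by ring
    have := punctured_limit_eq hF hG hev
    simp only [mul_zero, hQ0] at this
    -- this : g 0 * divDiff A z1 z1 = lam0 ^ d * g 0
    have h2 : divDiff A z1 z1 * g 0 = lam0 ^ d * g 0 := by linear_combination this
    exact mul_right_cancel₀ hg0 h2
  have hder : A.derivative.eval z1 = lam1 := by
    rw [hlam1, ← hdd, divDiff_diag]
  have habs1 : 1 < ‖lam1‖ := by
    rw [hlam1, norm_pow]
    calc (1:ℝ) = 1 ^ d := (one_pow d).symm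
      _ < ‖lam0‖ ^ d := pow_lt_pow_left₀ hrep zero_le_one hd0.ne'
  refine ⟨hz1fix, hder, habs1, ?_⟩
  -- the primitive d-th root of unity
  obtain ⟨ζ, hζd, hζpow⟩ : ∃ ζ : ℂ, ζ ^ d = 1 ∧ ∀ n : ℕ, ¬ d ∣ n → ζ ^ n ≠ 1 := by
    refine ⟨Complex.exp (2 * Real.pi * Complex.I / d), ?_, ?_⟩
    · rw [← Complex.exp_nat_mul, mul_div_cancel₀ _ hdC, Complex.exp_two_pi_mul_I]
    intro n hn h1
    rw [← Complex.exp_nat_mul, Complex.exp_eq_one_iff] at h1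
    obtain ⟨k, hk⟩ := h1
    have h2pi : (2 * (Real.pi : ℂ) * Complex.I) ≠ 0 := by
      simp [Real.pi_ne_zero, Complex.I_ne_zero, Complex.ofReal_ne_zero]
    have h3 : (n : ℂ) * (2 * (Real.pi : ℂ) * Complex.I)
        = (k : ℂ) * (d : ℂ) * (2 * (Real.pi : ℂ) * Complex.I) := by
      calc (n : ℂ) * (2 * (Real.pi : ℂ) * Complex.I)
          = (n : ℂ) * (2 * (Real.pi : ℂ) * Complex.I / d) * d := by field_simp
        _ = (k : ℂ) * (2 * (Real.pi : ℂ) * Complex.I) * d := by rw [hk]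
        _ = _ := by ring
    have hnk : (n : ℂ) = (k : ℂ) * d := mul_right_cancel₀ h2pi h3
    have hnk' : (n : ℤ) = k * (d : ℤ) := by exact_mod_cast hnk
    have hdvd : (d : ℤ) ∣ (n : ℤ) := ⟨k, by linear_combination hnk'⟩
    exact hn (Int.natCast_dvd_natCast.mp hdvd)
  -- symmetry: Q (ζ z) = Q z
  have hsym : ∀ z : ℂ, Q (ζ * z) = Q z := by
    intro z
    by_contra hw'
    have hw : Q (ζ * z) - Q z ≠ 0 := sub_ne_zero.2 hw'
    set H : ℂ → ℂ := fun z => Q (ζ * z) - Q z with hHdef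
    have hHdiff : Differentiable ℂ H :=
      (hQdiff.comp ((differentiable_const ζ).mul differentiable_id)).sub hQdiff
    have hHfun : ∀ w : ℂ, H (lam0 * w) = H w * divDiff A (Q (ζ * w)) (Q w) := by
      intro w
      have h1 : ζ * (lam0 * w) = lam0 * (ζ * w) := by ring
      rw [hHdef]
      simp only
      rw [h1, hQeq (ζ * w), hQeq w, ← divDiff_spec]
    have hH0 : AnalyticAt ℂ H 0 := hHdiff.analyticAt 0
    have hord_ne_top : analyticOrderAt H 0 ≠ ⊤ := by
      intro htop
      rw [analyticOrderAt_eq_top] at htop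
      have hOn : AnalyticOnNhd ℂ H Set.univ := fun w _ => hHdiff.analyticAt w
      have := hOn.eqOn_zero_of_preconnected_of_eventuallyEq_zero
        isPreconnected_univ (Set.mem_univ (0:ℂ)) htop
      exact hw (this (Set.mem_univ z))
    obtain ⟨m, hm⟩ := WithTop.ne_top_iff_exists.mp hord_ne_top
    obtain ⟨k, hk_an, hk0, hk⟩ := (AnalyticAt.analyticOrderAt_eq_natCast (n := m) hH0).1 hm.symm
    simp only [sub_zero, smul_eq_mul] at hk
    have hEcont : ContinuousAt (fun w : ℂ => divDiff A (Q (ζ * w)) (Q w)) 0 := by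
      have h1 : Continuous fun w : ℂ => (Q (ζ * w), Q w) :=
        (hQdiff.continuous.comp (continuous_const.mul continuous_id)).prodMk
          hQdiff.continuous
      exact ((divDiff_continuous A).comp h1).continuousAt
    set E : ℂ → ℂ := fun w => divDiff A (Q (ζ * w)) (Q w) with hEdef
    have hE0 : E 0 = lam0 ^ d := by
      rw [hEdef]
      simp only [mul_zero, hQ0]
      exact hdd
    rw [hEdef] at hEcont
    -- step 1: m = d
    have hk2 : ∀ᶠ w in 𝓝 (0:ℂ), H (lam0 * w) = (lam0 * w) ^ m * k (lam0 * w) := by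
      have hmap : Tendsto (fun w : ℂ => lam0 * w) (𝓝 0) (𝓝 0) := by
        have h := (continuous_mul_left lam0).tendsto (0:ℂ); rwa [mul_zero] at h
      exact hmap.eventually hk
    have hev1 : ∀ᶠ w in 𝓝[≠] (0:ℂ),
        lam0 ^ m * k (lam0 * w) = k w * E w := by
      filter_upwards [hk2.filter_mono nhdsWithin_le_nhds,
        hk.filter_mono nhdsWithin_le_nhds, self_mem_nhdsWithin] with w h1 h2 hwne
      have hwd : (w : ℂ) ^ m ≠ 0 := pow_ne_zero m hwne
      apply mul_left_cancel₀ hwd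
      have := hHfun w
      rw [h1, h2] at this
      calc w ^ m * (lam0 ^ m * k (lam0 * w)) = (lam0 * w) ^ m * k (lam0 * w) := by ring
        _ = w ^ m * k w * E w := this
        _ = w ^ m * (k w * E w) := by ring
    have hkl : ContinuousAt (fun w : ℂ => lam0 ^ m * k (lam0 * w)) 0 := by
      apply ContinuousAt.mul continuousAt_const
      have : (fun w : ℂ => k (lam0 * w)) = k ∘ (fun w => lam0 * w) := rfl
      rw [this]
      apply ContinuousAt.comp
      · simpa using hk_an.continuousAt
      · exact (continuous_const.mul continuous_id).continuousAt
    have hkr : ContinuousAt (fun w : ℂ => k w * E w) 0 :=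
      hk_an.continuousAt.mul hEcont
    have hlim1 := punctured_limit_eq hkl hkr hev1
    simp only [mul_zero, hE0] at hlim1
    -- hlim1 : lam0 ^ m * k 0 = k 0 * lam0 ^ d
    have hpow : lam0 ^ m = lam0 ^ d := by
      have h2 : lam0 ^ m * k 0 = lam0 ^ d * k 0 := by linear_combination hlim1
      exact mul_right_cancel₀ hk0 h2
    have hmd : m = d := by
      have habs : ‖lam0‖ ^ m = ‖lam0‖ ^ d := by
        rw [← norm_pow, ← norm_pow, hpow]
      exact pow_right_injective₀ (lt_trans zero_lt_one hrep) (ne_of_gt hrep) habs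
    -- step 2: k 0 = 0, contradiction
    have hev2 : ∀ᶠ w in 𝓝[≠] (0:ℂ), k w = g (ζ * w) - g w := by
      filter_upwards [hk.filter_mono nhdsWithin_le_nhds, self_mem_nhdsWithin] with w h1 hwne
      have hwd : (w : ℂ) ^ d ≠ 0 := pow_ne_zero d hwne
      apply mul_left_cancel₀ hwd
      have hHw : H w = w ^ d * (g (ζ * w) - g w) := by
        rw [hHdef]
        simp only
        have e1 : Q (ζ * w) - z1 = (ζ * w) ^ d * g (ζ * w) := hQfac (ζ * w)
        have e2 : Q w - z1 = w ^ d * g w := hQfac w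
        have : Q (ζ * w) - Q w = (ζ * w) ^ d * g (ζ * w) - w ^ d * g w := by
          linear_combination e1 - e2
        rw [this, mul_pow, hζd]
        ring
      rw [hmd] at h1
      rw [← h1, hHw]
    have hgl : ContinuousAt (fun w : ℂ => g (ζ * w) - g w) 0 := by
      apply ContinuousAt.sub ?_ hgcont
      have : (fun w : ℂ => g (ζ * w)) = g ∘ (fun w => ζ * w) := rfl
      rw [this]
      apply ContinuousAt.comp
      · simpa using hgcont
      · exact (continuous_const.mul continuous_id).continuousAt
    have hlim2 := punctured_limit_eq hk_an.continuousAt hgl hev2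
    simp only [mul_zero, sub_self] at hlim2
    exact hk0 hlim2
  -- Taylor coefficients of Q
  set a : ℕ → ℂ := fun n => ((Nat.factorial n : ℕ) : ℂ)⁻¹ * iteratedDeriv n Q 0 with hadef
  have hQsum : ∀ z : ℂ, HasSum (fun n => a n * z ^ n) (Q z) := by
    intro z
    have h := Complex.hasSum_taylorSeries_of_entire hQdiff 0 z
    simp only [sub_zero, smul_eq_mul] at h
    apply h.congr_fun
    intro n
    rw [hadef]
    ring
  have hacoeff : ∀ n : ℕ, ¬ d ∣ n → a n = 0 := by
    intro n hn
    have hQζ : (fun w => Q (ζ * w)) = Q := funext fun w => hsym w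
    have h := iteratedDeriv_comp_const_mul (hQdiff.contDiff (n := n)) ζ
    rw [hQζ] at h
    have h0 := congrFun h 0
    simp only [mul_zero] at h0
    have hit : iteratedDeriv n Q 0 = 0 := by
      by_contra hne
      have h1 : ζ ^ n * iteratedDeriv n Q 0 = 1 * iteratedDeriv n Q 0 := by
        rw [one_mul]; linear_combination h0.symm
      exact hζpow n hn (mul_right_cancel₀ hne h1)
    rw [hadef]
    simp [hit]
  -- the power series for PA
  set c : ℕ → ℂ := fun k => a (d * k) with hcdef
  set p : FormalMultilinearSeries ℂ ℂ ℂ := FormalMultilinearSeries.ofScalars ℂ c with hpdef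
  have hprad : p.radius = ⊤ := by
    apply ENNReal.eq_top_of_forall_nnreal_le
    intro r
    set s : ℝ := (r : ℝ) ^ ((d : ℝ)⁻¹) with hsdef
    have hs0 : 0 ≤ s := Real.rpow_nonneg r.coe_nonneg _
    have hsd : s ^ d = (r : ℝ) := by
      rw [hsdef, ← Real.rpow_natCast ((r : ℝ) ^ ((d : ℝ)⁻¹)) d, ← Real.rpow_mul r.coe_nonneg,
        inv_mul_cancel₀ (by exact_mod_cast hd0.ne' : (d : ℝ) ≠ 0), Real.rpow_one]
    have hsum := (hQsum (s : ℂ)).summable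
    have htend : Tendsto (fun n => ‖a n * (s : ℂ) ^ n‖) atTop (𝓝 0) := by
      simpa using hsum.tendsto_atTop_zero.norm
    obtain ⟨Cb, hCb⟩ := htend.bddAbove_range
    apply p.le_radius_of_bound Cb
    intro k
    have h1 : ‖p k‖ = ‖c k‖ := by
      rw [hpdef]
      exact FormalMultilinearSeries.ofScalars_norm ℂ c k
    have e1 : ‖a (d * k) * (s : ℂ) ^ (d * k)‖ = ‖a (d * k)‖ * s ^ (d * k) := by
      rw [norm_mul, norm_pow, Complex.norm_real, Real.norm_of_nonneg hs0]
    have e2 : (s : ℝ) ^ (d * k) = (r : ℝ) ^ k := by rw [pow_mul, hsd]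
    have e3 : ‖p k‖ * (r : ℝ) ^ k = ‖a (d * k) * (s : ℂ) ^ (d * k)‖ := by
      rw [h1, e1, e2]
    rw [e3]
    exact hCb ⟨d * k, rfl⟩
  set PA : ℂ → ℂ := p.sum with hPAdef
  have hball : HasFPowerSeriesOnBall PA p 0 p.radius :=
    p.hasFPowerSeriesOnBall (by rw [hprad]; exact ENNReal.zero_lt_top)
  have hPAdiff : Differentiable ℂ PA := by
    intro w
    have hmem : w ∈ EMetric.ball (0 : ℂ) p.radius := by
      rw [hprad]
      exact EMetric.mem_ball.2 (edist_lt_top w 0)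
    exact hball.differentiableOn.differentiableAt (EMetric.isOpen_ball.mem_nhds hmem)
  have hPAQ : ∀ z : ℂ, PA (z ^ d) = Q z := by
    intro z
    have hinj : Function.Injective (fun k : ℕ => d * k) := fun k1 k2 h =>
      Nat.eq_of_mul_eq_mul_left hd0 h
    have hzero : ∀ n ∉ Set.range (fun k : ℕ => d * k), a n * z ^ n = 0 := by
      intro n hnr
      have hndvd : ¬ d ∣ n := by
        rintro ⟨k, hk⟩
        exact hnr ⟨k, hk.symm⟩
      rw [hacoeff n hndvd, zero_mul]
    have h1 : HasSum ((fun n => a n * z ^ n) ∘ (fun k => d * k)) (Q z) :=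
      (hinj.hasSum_iff hzero).2 (hQsum z)
    have h2 : HasSum (fun k => c k • (z ^ d) ^ k) (Q z) := by
      apply h1.congr_fun
      intro k
      simp only [Function.comp, hcdef, smul_eq_mul, ← pow_mul]
    have h3 : PA (z ^ d) = ∑' k, c k • (z ^ d) ^ k := by
      rw [hPAdef, hpdef]
      exact FormalMultilinearSeries.ofScalars_sum_eq c (z ^ d)
    rw [h3, h2.tsum_eq]
  have hPA0 : PA 0 = z1 := by
    have h := hPAQ 0
    rwa [zero_pow hd0.ne', hQ0] at h
  have hPAderiv : deriv PA 0 ≠ 0 := by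
    have hder0 : Tendsto (slope PA 0) (𝓝[≠] 0) (𝓝 (deriv PA 0)) :=
      hasDerivAt_iff_tendsto_slope.1 (hPAdiff 0).hasDerivAt
    have hmap : Tendsto (fun z : ℂ => z ^ d) (𝓝[≠] 0) (𝓝[≠] 0) := by
      rw [tendsto_nhdsWithin_iff]
      constructor
      · have h : Tendsto (fun z : ℂ => z ^ d) (𝓝 0) (𝓝 0) := by
          simpa [zero_pow hd0.ne'] using (continuous_pow d).tendsto (0 : ℂ)
        exact h.mono_left nhdsWithin_le_nhds
      · filter_upwards [self_mem_nhdsWithin] with w hw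
        exact pow_ne_zero d hw
    have hcomp : Tendsto (fun z : ℂ => slope PA 0 (z ^ d)) (𝓝[≠] 0) (𝓝 (deriv PA 0)) :=
      hder0.comp hmap
    have heq : ∀ᶠ z in 𝓝[≠] (0 : ℂ), slope PA 0 (z ^ d) = g z := by
      filter_upwards [self_mem_nhdsWithin] with w hw
      rw [slope_def_field, sub_zero, hPAQ w, hPA0]
      have h := hQfac w
      rw [h]
      exact mul_div_cancel_left₀ _ (pow_ne_zero d hw)
    have hg : Tendsto g (𝓝[≠] 0) (𝓝 (g 0)) := hgcont.tendsto.mono_left nhdsWithin_le_nhds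
    have hfin : deriv PA 0 = g 0 := tendsto_nhds_unique (hcomp.congr' heq) hg
    rw [hfin]
    exact hg0
  have hPAfun : ∀ w : ℂ, PA (lam1 * w) = A.eval (PA w) := by
    intro w
    obtain ⟨y, hy⟩ := IsAlgClosed.exists_pow_nat_eq w hd0
    rw [← hy, hlam1]
    calc PA (lam0 ^ d * y ^ d) = PA ((lam0 * y) ^ d) := by rw [mul_pow]
      _ = Q (lam0 * y) := hPAQ _
      _ = A.eval (Q y) := hQeq y
      _ = A.eval (PA (y ^ d)) := by rw [hPAQ y]
  exact ⟨PA, ⟨hPAdiff, hPA0, hPAderiv, hPAfun⟩, fun z => (hPAQ z).symm⟩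
end
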